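/- Let Ω ⊆ ℍ be a symmetric slice domain. Then there exists a sequence (K_n)_{n∈ℕ} of compact subsets of Ω such that: each K_n is axially symmetric; K_n is contained in the interior of K_{n+1}; every compact subset of Ω is contained in K_n for some n (in particular ⋃_n K_n = Ω); and for every n, every connected component of ℍ* ∖ K_n contains a connected component of ℍ* ∖ Ω, where ℍ* denotes the one-point (Alexandrov) compactification of ℍ. -/

import Mathlib

open Quaternion Filter Topology
open Metric Set Bornology OnePoint

noncomputable section

/-- The 2-sphere `𝕊 = {q ∈ ℍ : q² = -1}` of quaternionic imaginary units. -/
def QS : Set ℍ[ℝ] := {q | q ^ 2 = -1}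

/-- The slice function `g_I(x,y) = f(x + yI)`. -/
def sliceFun (f : ℍ[ℝ] → ℍ[ℝ]) (I : ℍ[ℝ]) (p : ℝ × ℝ) : ℍ[ℝ] :=
  f ((p.1 : ℍ[ℝ]) + p.2 • I)

/-- `f` is slice regular on `Ω`: for each imaginary unit `I`, the slice function
`g_I(x,y) = f(x+yI)` is real differentiable and satisfies `∂g/∂x + I ∂g/∂y = 0`
at every point `(x,y)` with `x + yI ∈ Ω`. -/
def SliceRegularOn (f : ℍ[ℝ] → ℍ[ℝ]) (Ω : Set ℍ[ℝ]) : Prop :=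
  ∀ I ∈ QS, ∀ p : ℝ × ℝ, ((p.1 : ℍ[ℝ]) + p.2 • I) ∈ Ω →
    DifferentiableAt ℝ (sliceFun f I) p ∧
    fderiv ℝ (sliceFun f I) p (1, 0) + I * fderiv ℝ (sliceFun f I) p (0, 1) = 0

/-- The 2-sphere `x + y𝕊 = {x + yJ : J ∈ 𝕊}` (a real point when `y = 0`). -/
def qSphere (x y : ℝ) : Set ℍ[ℝ] := {q | ∃ I ∈ QS, q = (x : ℍ[ℝ]) + y • I}

/-- The symmetric open set `U(x₀+y₀𝕊, R) = {q : |(q-x₀)² + y₀²| < R²}`. -/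
def sphU (x0 y0 R : ℝ) : Set ℍ[ℝ] :=
  {q | ‖(q - (x0 : ℍ[ℝ])) ^ 2 + ((y0 : ℍ[ℝ])) ^ 2‖ < R ^ 2}

/-- `Ω` is axially symmetric. -/
def AxSymm (Ω : Set ℍ[ℝ]) : Prop :=
  ∀ x y : ℝ, ∀ I ∈ QS, ((x : ℍ[ℝ]) + y • I) ∈ Ω → qSphere x y ⊆ Ω

/-- `Ω` is a symmetric slice domain: an axially symmetric, open, connected set that
meets the real axis and whose intersection with each slice `L_I = ℝ + ℝI` is connected. -/
def SymmSliceDomain (Ω : Set ℍ[ℝ]) : Prop :=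
  IsOpen Ω ∧ IsConnected Ω ∧ AxSymm Ω ∧ (∃ r : ℝ, (r : ℍ[ℝ]) ∈ Ω) ∧
    ∀ I ∈ QS, IsConnected {q ∈ Ω | ∃ a b : ℝ, q = (a : ℍ[ℝ]) + b • I}

lemma mem_QS_iff {I : ℍ[ℝ]} : I ∈ QS ↔ I.re = 0 ∧ normSq I = 1 := by
  constructor
  · intro h
    have h' : I * I = -1 := by rw [← sq]; exact h
    have h1 : I.re * I.re - I.imI * I.imI - I.imJ * I.imJ - I.imK * I.imK = -1 := by
      have := congrArg QuaternionAlgebra.re h'; simpa [Quaternion.re_mul] using this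
    have h2 : I.re * I.imI + I.imI * I.re + I.imJ * I.imK - I.imK * I.imJ = 0 := by
      have := congrArg QuaternionAlgebra.imI h'; simpa [Quaternion.imI_mul] using this
    have h3 : I.re * I.imJ - I.imI * I.imK + I.imJ * I.re + I.imK * I.imI = 0 := by
      have := congrArg QuaternionAlgebra.imJ h'; simpa [Quaternion.imJ_mul] using this
    have h4 : I.re * I.imK + I.imI * I.imJ - I.imJ * I.imI + I.imK * I.re = 0 := by
      have := congrArg QuaternionAlgebra.imK h'; simpa [Quaternion.imK_mul] using this
    have hre : I.re = 0 := by
      by_contra hre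
      have hi : I.imI = 0 := by
        have h2' : I.re * I.imI = 0 := by linear_combination h2 / 2
        exact (mul_eq_zero.mp h2').resolve_left hre
      have hj : I.imJ = 0 := by
        have h3' : I.re * I.imJ = 0 := by linear_combination h3 / 2
        exact (mul_eq_zero.mp h3').resolve_left hre
      have hk : I.imK = 0 := by
        have h4' : I.re * I.imK = 0 := by linear_combination h4 / 2
        exact (mul_eq_zero.mp h4').resolve_left hre
      rw [hi, hj, hk] at h1
      nlinarith [mul_self_nonneg I.re]
    refine ⟨hre, ?_⟩
    rw [Quaternion.normSq_def']
    rw [hre] at h1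
    ring_nf
    nlinarith [h1]
  · rintro ⟨h0, h1⟩
    show I ^ 2 = -1
    have h1' : I.imI * I.imI + I.imJ * I.imJ + I.imK * I.imK = 1 := by
      have := Quaternion.normSq_def' I
      rw [h1, h0] at this
      nlinarith [this]
    rw [sq]
    ext
    · simp only [Quaternion.re_mul, Quaternion.re_neg, Quaternion.re_one, h0]
      nlinarith [h1']
    · simp only [Quaternion.imI_mul, Quaternion.imI_neg, Quaternion.imI_one, h0]
      ring
    · simp only [Quaternion.imJ_mul, Quaternion.imJ_neg, Quaternion.imJ_one, h0]
      ring
    · simp only [Quaternion.imK_mul, Quaternion.imK_neg, Quaternion.imK_one, h0]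
      ring

lemma smul_mem_QS {v : ℍ[ℝ]} (h0 : v.re = 0) (hv : v ≠ 0) : (‖v‖⁻¹ • v) ∈ QS := by
  rw [mem_QS_iff]
  constructor
  · show ‖v‖⁻¹ • v.re = 0
    rw [h0, smul_zero]
  · rw [Quaternion.normSq_eq_norm_mul_self, norm_smul]
    have hn : ‖v‖ ≠ 0 := norm_ne_zero_iff.2 hv
    rw [norm_inv, norm_norm]
    field_simp

lemma conj_mem_QS {u I : ℍ[ℝ]} (hu : u ≠ 0) (hI : I ∈ QS) : u * I * u⁻¹ ∈ QS := by
  have hI2 : I * I = -1 := by rw [← sq]; exact hI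
  show (u * I * u⁻¹) ^ 2 = -1
  rw [sq]
  have e1 : u * I * u⁻¹ * (u * I * u⁻¹) = u * I * (u⁻¹ * u) * I * u⁻¹ := by
    simp only [mul_assoc]
  rw [e1, inv_mul_cancel₀ hu, mul_one, mul_assoc u I I, hI2]
  simp [mul_inv_cancel₀ hu]

lemma exists_conj {I J : ℍ[ℝ]} (hI : I ∈ QS) (hJ : J ∈ QS)
    (hIre : I.re = 0) :
    ∃ u : ℍ[ℝ], u ≠ 0 ∧ u * I = J * u := by
  have hI2 : I * I = -1 := by rw [← sq]; exact hI
  have hJ2 : J * J = -1 := by rw [← sq]; exact hJ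
  by_cases h : I + J = 0
  · have hJI : J = -I := by
      have := congrArg (fun z => z - I) h
      simpa [add_sub_cancel_left] using (eq_neg_of_add_eq_zero_right h)
    subst hJI
    by_cases ha : I.imI = 0 ∧ I.imJ = 0
    · refine ⟨⟨0, 1, 0, 0⟩, ?_, ?_⟩
      · intro h0
        have := congrArg QuaternionAlgebra.imI h0
        simp at this
      · obtain ⟨u, hu⟩ : ∃ u : ℍ[ℝ], u = ⟨0, 1, 0, 0⟩ := ⟨_, rfl⟩
        rw [← hu]
        have h1 : u.re = 0 ∧ u.imI = 1 ∧ u.imJ = 0 ∧ u.imK = 0 := by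
          subst hu; exact ⟨rfl, rfl, rfl, rfl⟩
        ext <;>
          simp [Quaternion.re_mul, Quaternion.imI_mul, Quaternion.imJ_mul,
            Quaternion.imK_mul, hIre, ha.1, ha.2, h1] <;> ring
    · refine ⟨⟨0, -I.imJ, I.imI, 0⟩, ?_, ?_⟩
      · intro h0
        rcases not_and_or.mp ha with hb | hb
        · have := congrArg QuaternionAlgebra.imJ h0
          simp at this
          exact hb this
        · have := congrArg QuaternionAlgebra.imI h0
          simp at this
          exact hb this
      · obtain ⟨u, hu⟩ : ∃ u : ℍ[ℝ], u = ⟨0, -I.imJ, I.imI, 0⟩ := ⟨_, rfl⟩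
        rw [← hu]
        have h1 : u.re = 0 ∧ u.imI = -I.imJ ∧ u.imJ = I.imI ∧ u.imK = 0 := by
          subst hu; exact ⟨rfl, rfl, rfl, rfl⟩
        ext <;>
          simp [Quaternion.re_mul, Quaternion.imI_mul, Quaternion.imJ_mul,
            Quaternion.imK_mul, hIre, h1] <;> ring
  · refine ⟨I + J, h, ?_⟩
    rw [add_mul, mul_add, hI2, hJ2]
    exact add_comm _ _

lemma norm_conj (u b : ℍ[ℝ]) (hu : u ≠ 0) : ‖u * b * u⁻¹‖ = ‖b‖ := by
  have hn : ‖u‖ ≠ 0 := norm_ne_zero_iff.2 hu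
  rw [norm_mul, norm_mul, norm_inv]
  field_simp

lemma conj_sandwich (u a : ℍ[ℝ]) (hu : u ≠ 0) : u * (u⁻¹ * a * u) * u⁻¹ = a := by
  simp only [← mul_assoc]
  rw [mul_inv_cancel₀ hu, one_mul, mul_assoc, mul_inv_cancel₀ hu, mul_one]

lemma norm_conj_sub (u a b : ℍ[ℝ]) (hu : u ≠ 0) :
    ‖u * b * u⁻¹ - a‖ = ‖b - u⁻¹ * a * u‖ := by
  have key : u * (b - u⁻¹ * a * u) * u⁻¹ = u * b * u⁻¹ - a := by
    rw [mul_sub, sub_mul, conj_sandwich u a hu]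
  rw [← key, norm_conj _ _ hu]

lemma conj_point (u I J : ℍ[ℝ]) (hu : u ≠ 0) (huIJ : u * I = J * u) (x y : ℝ) :
    u * ((x : ℍ[ℝ]) + y • I) * u⁻¹ = (x : ℍ[ℝ]) + y • J := by
  have h1 : u * ((x : ℍ[ℝ]) + y • I) = ((x : ℍ[ℝ]) + y • J) * u := by
    rw [mul_add, add_mul, mul_smul_comm, huIJ, ← smul_mul_assoc, ← Quaternion.coe_commutes]
  rw [h1, mul_assoc, mul_inv_cancel₀ hu, mul_one]

lemma axsymm_conj {Ω : Set ℍ[ℝ]} (hAx : AxSymm Ω) {a : ℍ[ℝ]} (u : ℍ[ℝ]) (hu : u ≠ 0)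
    (ha : a ∉ Ω) : u * a * u⁻¹ ∉ Ω := by
  intro hmem
  by_cases hv : a.im = 0
  · have haa : a = ((a.re : ℝ) : ℍ[ℝ]) := by
      conv_lhs => rw [← a.re_add_im]
      rw [hv, add_zero]
    rw [haa, ← Quaternion.coe_commutes, mul_assoc, mul_inv_cancel₀ hu, mul_one] at hmem
    exact ha (haa ▸ hmem)
  · set r := a.re with hr
    set v := a.im with hvdef
    have hvre : v.re = 0 := a.re_im
    have hM : (‖v‖⁻¹ • v) ∈ QS := smul_mem_QS hvre hv
    have hnv : ‖v‖ ≠ 0 := norm_ne_zero_iff.2 hv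
    have haeq : a = (r : ℍ[ℝ]) + ‖v‖ • (‖v‖⁻¹ • v) := by
      rw [smul_smul, mul_inv_cancel₀ hnv, one_smul, Quaternion.re_add_im]
    have hM' : (u * (‖v‖⁻¹ • v) * u⁻¹) ∈ QS := conj_mem_QS hu hM
    have haeq' : u * a * u⁻¹ = (r : ℍ[ℝ]) + ‖v‖ • (u * (‖v‖⁻¹ • v) * u⁻¹) := by
      conv_lhs => rw [haeq]
      rw [mul_add, add_mul, ← Quaternion.coe_commutes, mul_assoc, mul_inv_cancel₀ hu, mul_one,
        mul_smul_comm, smul_mul_assoc]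
    rw [haeq'] at hmem
    have hsub := hAx r ‖v‖ _ hM' hmem
    exact ha (hsub ⟨‖v‖⁻¹ • v, hM, haeq⟩)

def Kset (Ω : Set ℍ[ℝ]) (n : ℕ) : Set ℍ[ℝ] :=
  {q | ‖q‖ ≤ (n : ℝ) ∧ ∀ a, a ∉ Ω → 1 / ((n : ℝ) + 1) ≤ ‖q - a‖}

lemma Kset_compact (Ω : Set ℍ[ℝ]) (n : ℕ) : IsCompact (Kset Ω n) := by
  apply isCompact_of_isClosed_isBounded
  · have : Kset Ω n = {q : ℍ[ℝ] | ‖q‖ ≤ (n : ℝ)} ∩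
        ⋂ a ∈ Ωᶜ, {q : ℍ[ℝ] | 1 / ((n : ℝ) + 1) ≤ ‖q - a‖} := by
      ext q
      simp only [Kset, mem_setOf_eq, mem_inter_iff, mem_iInter, mem_compl_iff]
    rw [this]
    refine (isClosed_le continuous_norm continuous_const).inter ?_
    exact isClosed_biInter fun a _ =>
      isClosed_le continuous_const (continuous_norm.comp (continuous_id.sub continuous_const))
  · exact (isBounded_closedBall (x := (0:ℍ[ℝ])) (r := (n:ℝ))).subset fun q hq => by
      simpa [mem_closedBall, dist_zero_right] using hq.1

lemma Kset_subset (Ω : Set ℍ[ℝ]) (n : ℕ) : Kset Ω n ⊆ Ω := by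
  intro q hq
  by_contra h
  have := hq.2 q h
  simp only [sub_self, norm_zero] at this
  have hpos : 0 < 1 / ((n : ℝ) + 1) := by positivity
  linarith

lemma Kset_axsymm {Ω : Set ℍ[ℝ]} (hAx : AxSymm Ω) (n : ℕ) : AxSymm (Kset Ω n) := by
  intro x y I hI hmem q' hq'
  obtain ⟨J, hJ, rfl⟩ := hq'
  obtain ⟨u, hu, huIJ⟩ := exists_conj hI hJ (mem_QS_iff.1 hI).1
  have hconj := conj_point u I J hu huIJ x y
  constructor
  · rw [← hconj, norm_conj _ _ hu]
    exact hmem.1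
  · intro a ha
    have ha' : u⁻¹ * a * u ∉ Ω := by
      have := axsymm_conj hAx u⁻¹ (inv_ne_zero hu) ha
      rwa [inv_inv] at this
    calc 1 / ((n : ℝ) + 1) ≤ ‖((x : ℍ[ℝ]) + y • I) - (u⁻¹ * a * u)‖ := hmem.2 _ ha'
      _ = ‖u * ((x : ℍ[ℝ]) + y • I) * u⁻¹ - a‖ := (norm_conj_sub u a _ hu).symm
      _ = ‖((x : ℍ[ℝ]) + y • J) - a‖ := by rw [hconj]

lemma Kset_interior (Ω : Set ℍ[ℝ]) (n : ℕ) : Kset Ω n ⊆ interior (Kset Ω (n + 1)) := by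
  intro q hq
  have h1p : (0:ℝ) < (n:ℝ)+1 := by positivity
  have h2p : (0:ℝ) < (n:ℝ)+2 := by positivity
  have hrpos : 0 < 1/((n:ℝ)+1) - 1/((n:ℝ)+2) := by
    rw [sub_pos, div_lt_div_iff₀ h2p h1p]; linarith
  have hr1 : 1/((n:ℝ)+1) - 1/((n:ℝ)+2) ≤ 1 := by
    have h1 : 1 / ((n : ℝ) + 1) ≤ 1 := by
      rw [div_le_one h1p]; linarith [Nat.cast_nonneg (α := ℝ) n]
    have h2 : (0:ℝ) ≤ 1 / ((n : ℝ) + 2) := by positivity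
    linarith
  rw [mem_interior]
  refine ⟨ball q (1/((n:ℝ)+1) - 1/((n:ℝ)+2)), fun q' hq' => ?_, isOpen_ball,
    mem_ball_self hrpos⟩
  have hdist : ‖q' - q‖ < 1/((n:ℝ)+1) - 1/((n:ℝ)+2) := by
    rwa [← dist_eq_norm, ← mem_ball]
  constructor
  · push_cast
    have hq'n : ‖q'‖ ≤ ‖q‖ + ‖q' - q‖ := by simpa using norm_add_le q (q' - q)
    linarith [hq.1]
  · intro a ha
    have h1 : 1 / ((n : ℝ) + 1) ≤ ‖q - a‖ := hq.2 a ha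
    have h2 : ‖q - a‖ ≤ ‖q - q'‖ + ‖q' - a‖ := by
      simpa using norm_add_le (q - q') (q' - a)
    have h3 : ‖q - q'‖ < 1/((n:ℝ)+1) - 1/((n:ℝ)+2) := by rwa [norm_sub_rev]
    push_cast
    have e : ((n:ℝ) + 1 + 1) = (n:ℝ) + 2 := by ring
    rw [e]
    linarith

lemma Kset_absorb {Ω : Set ℍ[ℝ]} (hopen : IsOpen Ω) (C : Set ℍ[ℝ]) (hCΩ : C ⊆ Ω)
    (hC : IsCompact C) : ∃ n, C ⊆ Kset Ω n := by
  rcases eq_empty_or_nonempty C with rfl | hCne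
  · exact ⟨0, empty_subset _⟩
  obtain ⟨R, hR⟩ : ∃ R : ℝ, ∀ q ∈ C, ‖q‖ ≤ R := by
    obtain ⟨R, hR⟩ := hC.isBounded.subset_closedBall 0
    exact ⟨R, fun q hq => by simpa [dist_zero_right] using hR hq⟩
  obtain ⟨m, hm0, hmd⟩ : ∃ m : ℝ, 0 < m ∧ ∀ q ∈ C, ∀ a, a ∉ Ω → m ≤ ‖q - a‖ := by
    by_cases hcompl : Ωᶜ.Nonempty
    · have hcont : ContinuousOn (fun q : ℍ[ℝ] => infDist q Ωᶜ) C :=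
        (continuous_infDist_pt _).continuousOn
      obtain ⟨q₀, hq₀C, hq₀min⟩ := hC.exists_isMinOn hCne hcont
      refine ⟨infDist q₀ Ωᶜ, ?_, ?_⟩
      · refine (IsClosed.notMem_iff_infDist_pos hopen.isClosed_compl hcompl).1 ?_
        simpa using hCΩ hq₀C
      · intro q hq a ha
        calc infDist q₀ Ωᶜ ≤ infDist q Ωᶜ := hq₀min hq
          _ ≤ dist q a := infDist_le_dist_of_mem ha
          _ = ‖q - a‖ := dist_eq_norm q a
    · refine ⟨1, one_pos, fun q _ a ha => absurd ?_ hcompl⟩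
      exact ⟨a, ha⟩
  obtain ⟨n₁, hn₁⟩ := exists_nat_ge R
  obtain ⟨n₂, hn₂⟩ := exists_nat_ge (1 / m)
  refine ⟨max n₁ n₂, fun q hq => ⟨?_, ?_⟩⟩
  · refine (hR q hq).trans (hn₁.trans ?_)
    exact_mod_cast le_max_left n₁ n₂
  · intro a ha
    refine le_trans ?_ (hmd q hq a ha)
    have h1 : 1 / m ≤ (max n₁ n₂ : ℝ) + 1 := by
      refine hn₂.trans ?_
      have : (n₂ : ℝ) ≤ (max n₁ n₂ : ℝ) := by exact_mod_cast le_max_right n₁ n₂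
      linarith
    have h2 : 1 / ((max n₁ n₂ : ℝ) + 1) ≤ 1 / (1 / m) :=
      one_div_le_one_div_of_le (by positivity) h1
    rw [one_div_one_div m] at h2
    exact_mod_cast h2

lemma Kset_union {Ω : Set ℍ[ℝ]} (hopen : IsOpen Ω) : (⋃ n, Kset Ω n) = Ω := by
  apply Subset.antisymm
  · refine iUnion_subset fun n => ?_
    intro q hq
    by_contra h
    have := hq.2 q h
    simp only [sub_self, norm_zero] at this
    have hpos : 0 < 1 / ((n : ℝ) + 1) := by positivity
    linarith
  · intro q hq
    obtain ⟨n, hn⟩ := Kset_absorb hopen {q} (singleton_subset_iff.2 hq) isCompact_singleton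
    exact mem_iUnion.2 ⟨n, hn rfl⟩

lemma comp_helper {K W : Set ℍ[ℝ]} (hKW : K ⊆ W)
    {S : Set (OnePoint ℍ[ℝ])} (hS : IsPreconnected S)
    (hSK : ∀ x ∈ S, x ∉ OnePoint.some '' K)
    {p p' : OnePoint ℍ[ℝ]} (hp : p ∈ S) (hp' : p' ∈ S)
    (hp'W : p' ∉ OnePoint.some '' W) :
    p' ∉ OnePoint.some '' W ∧
      connectedComponentIn (OnePoint.some '' W)ᶜ p' ⊆
        connectedComponentIn (OnePoint.some '' K)ᶜ p := by
  refine ⟨hp'W, ?_⟩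
  have hsub : (OnePoint.some '' W)ᶜ ⊆ (OnePoint.some '' K)ᶜ :=
    compl_subset_compl.2 (image_mono hKW)
  have hSsub : S ⊆ (OnePoint.some '' K)ᶜ := fun x hx => hSK x hx
  have h1 : S ⊆ connectedComponentIn (OnePoint.some '' K)ᶜ p :=
    hS.subset_connectedComponentIn hp hSsub
  have h2 : connectedComponentIn (OnePoint.some '' K)ᶜ p
      = connectedComponentIn (OnePoint.some '' K)ᶜ p' := connectedComponentIn_eq (h1 hp')
  exact (connectedComponentIn_mono p' hsub).trans h2.symm.subset

lemma infty_not_mem_image (W : Set ℍ[ℝ]) : (∞ : OnePoint ℍ[ℝ]) ∉ OnePoint.some '' W := by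
  rintro ⟨x, -, hx⟩
  exact OnePoint.coe_ne_infty x hx

lemma rank_quat : 1 < Module.rank ℝ ℍ[ℝ] := by
  rw [Quaternion.rank_eq_four]
  norm_num

lemma compl_closedBall_preconnected (n : ℕ) :
    IsPreconnected ((closedBall (0:ℍ[ℝ]) (n:ℝ))ᶜ) := by
  have hB : (closedBall (0:ℍ[ℝ]) (n:ℝ))ᶜ
      = (fun p : ℝ × ℍ[ℝ] => p.1 • p.2) '' (Ioi (n:ℝ) ×ˢ sphere (0:ℍ[ℝ]) 1) := by
    ext x
    simp only [mem_compl_iff, mem_closedBall, dist_zero_right, not_le, mem_image, mem_prod,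
      mem_Ioi, mem_sphere_iff_norm, sub_zero]
    constructor
    · intro hx
      have hx0 : x ≠ 0 := by
        intro h0
        rw [h0, norm_zero] at hx
        exact absurd hx (Nat.cast_nonneg (α := ℝ) n).not_gt
      have hnx : ‖x‖ ≠ 0 := norm_ne_zero_iff.2 hx0
      refine ⟨(‖x‖, ‖x‖⁻¹ • x), ⟨hx, ?_⟩, ?_⟩
      · rw [norm_smul, norm_inv, norm_norm]
        field_simp
      · simp only
        rw [smul_smul, mul_inv_cancel₀ hnx, one_smul]
    · rintro ⟨⟨t, s⟩, ⟨ht, hs⟩, rfl⟩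
      simp only
      rw [norm_smul, hs, mul_one, Real.norm_eq_abs]
      calc (n:ℝ) < t := ht
        _ ≤ |t| := le_abs_self t
  rw [hB]
  exact ((isPreconnected_Ioi.prod (isPreconnected_sphere rank_quat 0 1)).image _
    (continuous_smul.continuousOn))

lemma infty_mem_closure (n : ℕ) :
    (∞ : OnePoint ℍ[ℝ]) ∈ closure (OnePoint.some '' (closedBall (0:ℍ[ℝ]) (n:ℝ))ᶜ) := by
  rw [mem_closure_iff_nhds_basis OnePoint.hasBasis_nhds_infty]
  rintro s ⟨hscl, hscomp⟩
  obtain ⟨R, hR⟩ := hscomp.isBounded.subset_closedBall 0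
  set c : ℝ := max (n:ℝ) R + 1 with hc
  have hcn : (n:ℝ) < c := by
    have := le_max_left (n:ℝ) R; rw [hc]; linarith
  have hcR : R < c := by
    have := le_max_right (n:ℝ) R; rw [hc]; linarith
  set x : ℍ[ℝ] := (c : ℝ) • (1 : ℍ[ℝ]) with hx
  have hnormx : ‖x‖ = c := by
    rw [hx, norm_smul, norm_one, mul_one, Real.norm_eq_abs, abs_of_pos (by linarith [hcn, Nat.cast_nonneg (α := ℝ) n])]
  refine ⟨OnePoint.some x, ⟨x, ?_, rfl⟩, ?_⟩
  · simp only [mem_compl_iff, mem_closedBall, dist_zero_right, not_le, hnormx]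
    exact hcn
  · left
    refine ⟨x, fun hxs => ?_, rfl⟩
    have := hR hxs
    simp only [mem_closedBall, dist_zero_right, hnormx] at this
    linarith

lemma Kset_components (Ω : Set ℍ[ℝ]) (n : ℕ) (p : OnePoint ℍ[ℝ])
    (hp : p ∉ OnePoint.some '' Kset Ω n) :
    ∃ p' : OnePoint ℍ[ℝ], p' ∉ OnePoint.some '' Ω ∧
      connectedComponentIn (OnePoint.some '' Ω)ᶜ p' ⊆
        connectedComponentIn (OnePoint.some '' Kset Ω n)ᶜ p := by
  have hKW : Kset Ω n ⊆ Ω := Kset_subset Ω n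
  cases p with
  | infty =>
    refine ⟨∞, comp_helper hKW isPreconnected_singleton ?_ rfl rfl (infty_not_mem_image Ω)⟩
    intro x hx
    rw [mem_singleton_iff] at hx
    rw [hx]
    exact hp
  | coe q =>
    have hq : q ∉ Kset Ω n := fun h => hp ⟨q, h, rfl⟩
    by_cases hn : ‖q‖ ≤ (n : ℝ)
    · have hex : ∃ a, a ∉ Ω ∧ ‖q - a‖ < 1 / ((n : ℝ) + 1) := by
        by_contra hall
        push_neg at hall
        exact hq ⟨hn, fun a ha => hall a ha⟩
      obtain ⟨a, ha, hlt⟩ := hex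
      have hrpos : (0:ℝ) < 1 / ((n : ℝ) + 1) := by positivity
      refine ⟨OnePoint.some a, comp_helper hKW
        (((convex_ball a (1 / ((n : ℝ) + 1))).isPreconnected).image _
          OnePoint.continuous_coe.continuousOn) ?_ ?_ ?_ ?_⟩
      · rintro x ⟨b, hb, rfl⟩ ⟨k, hk, hkx⟩
        have hkb : k = b := Option.some.inj hkx
        subst hkb
        have h1 := hk.2 a ha
        rw [mem_ball, dist_eq_norm] at hb
        linarith
      · exact ⟨q, by rw [mem_ball, dist_eq_norm]; exact hlt, rfl⟩
      · exact ⟨a, mem_ball_self hrpos, rfl⟩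
      · rintro ⟨b, hb, hba⟩
        exact ha (Option.some.inj hba ▸ hb)
    · refine ⟨∞, comp_helper (S := OnePoint.some '' (closedBall (0:ℍ[ℝ]) (n:ℝ))ᶜ ∪ {∞}) hKW (IsPreconnected.subset_closure
        ((compl_closedBall_preconnected n).image _ OnePoint.continuous_coe.continuousOn)
        subset_union_left ?_) ?_ ?_ (Or.inr rfl) (infty_not_mem_image Ω)⟩
      · rintro x (hx | hx)
        · exact subset_closure hx
        · rw [mem_singleton_iff] at hx
          rw [hx]
          exact infty_mem_closure n
      · rintro x (⟨b, hb, rfl⟩ | hx)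
        · rintro ⟨k, hk, hkx⟩
          have hkb : k = b := Option.some.inj hkx
          subst hkb
          rw [mem_compl_iff, mem_closedBall, dist_zero_right, not_le] at hb
          exact absurd hk.1 hb.not_ge
        · rw [mem_singleton_iff] at hx
          rw [hx]
          exact infty_not_mem_image _
      · exact Or.inl ⟨q, by rw [mem_compl_iff, mem_closedBall, dist_zero_right]; exact hn, rfl⟩

/-- a symmetric slice domain admits an exhaustion by axially symmetric
compact sets `K_n` with `K_n ⊆ int K_{n+1}`, such that every compact subset of `Ω` lies
in some `K_n`, and every connected component of `ℍ* ∖ K_n` contains a connected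
component of `ℍ* ∖ Ω` (`ℍ*` being the one-point compactification of `ℍ`). -/
theorem symmetric_compact_exhaustion (Ω : Set ℍ[ℝ]) (hΩ : SymmSliceDomain Ω) :
    ∃ K : ℕ → Set ℍ[ℝ],
      (∀ n, IsCompact (K n)) ∧
      (∀ n, K n ⊆ Ω) ∧
      (∀ n, AxSymm (K n)) ∧
      (∀ n, K n ⊆ interior (K (n + 1))) ∧
      (∀ C : Set ℍ[ℝ], C ⊆ Ω → IsCompact C → ∃ n, C ⊆ K n) ∧
      (⋃ n, K n) = Ω ∧
      (∀ n, ∀ p : OnePoint ℍ[ℝ], p ∉ OnePoint.some '' K n →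
        ∃ p' : OnePoint ℍ[ℝ], p' ∉ OnePoint.some '' Ω ∧
          connectedComponentIn (OnePoint.some '' Ω)ᶜ p' ⊆
            connectedComponentIn (OnePoint.some '' K n)ᶜ p) := by
  obtain ⟨hopen, -, hAx, -, -⟩ := hΩ
  exact ⟨Kset Ω, fun n => Kset_compact Ω n, fun n => Kset_subset Ω n,
    fun n => Kset_axsymm hAx n, fun n => Kset_interior Ω n,
    fun C hC hCc => Kset_absorb hopen C hC hCc, Kset_union hopen,
    fun n p hp => Kset_components Ω n p hp⟩
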